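/- Let P be a finite set of points in a metric space and r > 0. If an r-net of P has at most k points, then the optimal k-center clustering radius of P is strictly less than r. Conversely, if every r-net of P has more than k points, then r is at most twice the optimal k-center clustering radius. -/
import Mathlib


/-- The optimal `k`-center clustering radius of a finite point set `P`:
the infimum over subsets `S ⊆ P` with at most `k` points of the maximum distance
of a point of `P` to `S`. -/
noncomputable def kCenterOpt {X : Type*} [MetricSpace X] (P : Finset X) (k : ℕ) : ℝ :=
  sInf {ρ : ℝ | 0 ≤ ρ ∧ ∃ S : Finset X, S ⊆ P ∧ S.card ≤ k ∧ ∀ p ∈ P, ∃ c ∈ S, dist p c ≤ ρ}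

/-- If some `r`-net of `P` has at most `k` points, then the optimal `k`-center radius is `< r`;
if every `r`-net of `P` has more than `k` points, then `r` is at most twice the optimal
`k`-center radius. -/
theorem stmt1 {X : Type*} [MetricSpace X] (P : Finset X) (hP : P.Nonempty)
    (r : ℝ) (hr : 0 < r) (k : ℕ) (hk : 1 ≤ k) :
    ((∃ C : Finset X, C ⊆ P ∧ (∀ p ∈ C, ∀ q ∈ C, p ≠ q → r ≤ dist p q) ∧
        (∀ p ∈ P, ∃ q ∈ C, dist p q < r) ∧ C.card ≤ k) →
      kCenterOpt P k < r) ∧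
    ((∀ C : Finset X, C ⊆ P → (∀ p ∈ C, ∀ q ∈ C, p ≠ q → r ≤ dist p q) →
        (∀ p ∈ P, ∃ q ∈ C, dist p q < r) → k < C.card) →
      r ≤ 2 * kCenterOpt P k) := by
  classical
  set A := {ρ : ℝ | 0 ≤ ρ ∧ ∃ S : Finset X, S ⊆ P ∧ S.card ≤ k ∧
      ∀ p ∈ P, ∃ c ∈ S, dist p c ≤ ρ} with hA
  have hEq : kCenterOpt P k = sInf A := rfl
  have hbdd : BddBelow A := ⟨0, fun ρ hρ => hρ.1⟩
  obtain ⟨p0, hp0⟩ := hP.exists_mem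
  have hAne : A.Nonempty := by
    refine ⟨P.sup' hP (fun p => dist p p0), ?_, {p0}, ?_, ?_, ?_⟩
    · exact le_trans dist_nonneg (Finset.le_sup' (fun p => dist p p0) hp0)
    · simpa using hp0
    · simpa using hk
    · intro p hp
      exact ⟨p0, Finset.mem_singleton_self _, Finset.le_sup' (fun p => dist p p0) hp⟩
  constructor
  · rintro ⟨C, hCP, _, hnet, hcard⟩
    have hg : ∀ p : X, p ∈ P → ∃ q ∈ C, dist p q < r := hnet
    set g : X → X := fun p => if h : p ∈ P then (hg p h).choose else p with hgdef
    have hgC : ∀ p ∈ P, g p ∈ C := by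
      intro p hp
      simp only [hgdef, dif_pos hp]
      exact (hg p hp).choose_spec.1
    have hglt : ∀ p ∈ P, dist p (g p) < r := by
      intro p hp
      simp only [hgdef, dif_pos hp]
      exact (hg p hp).choose_spec.2
    have hρA : P.sup' hP (fun p => dist p (g p)) ∈ A := by
      refine ⟨le_trans dist_nonneg (Finset.le_sup' (fun p => dist p (g p)) hp0), C, hCP, hcard, ?_⟩
      intro p hp
      exact ⟨g p, hgC p hp, Finset.le_sup' (fun p => dist p (g p)) hp⟩
    have h1 : kCenterOpt P k ≤ P.sup' hP (fun p => dist p (g p)) := by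
      rw [hEq]; exact csInf_le hbdd hρA
    have h2 : P.sup' hP (fun p => dist p (g p)) < r := by
      rw [Finset.sup'_lt_iff]
      intro p hp
      exact hglt p hp
    exact lt_of_le_of_lt h1 h2
  · intro hall
    by_contra hcon
    push_neg at hcon
    have hlt : sInf A < r / 2 := by linarith [hEq ▸ hcon]
    obtain ⟨ρ, hρA, hρlt⟩ := exists_lt_of_csInf_lt hAne hlt
    obtain ⟨hρ0, S, hSP, hScard, hScov⟩ := hρA
    -- take a maximal r-separated subset of P
    set 𝒮 := P.powerset.filter (fun C => ∀ p ∈ C, ∀ q ∈ C, p ≠ q → r ≤ dist p q) with h𝒮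
    have h𝒮ne : 𝒮.Nonempty := by
      refine ⟨∅, ?_⟩
      simp [h𝒮]
    obtain ⟨C, hC𝒮, hCmax⟩ := Finset.exists_max_image 𝒮 Finset.card h𝒮ne
    rw [h𝒮, Finset.mem_filter, Finset.mem_powerset] at hC𝒮
    obtain ⟨hCP, hCsep⟩ := hC𝒮
    have hCnet : ∀ p ∈ P, ∃ q ∈ C, dist p q < r := by
      intro p hp
      by_contra hno
      push_neg at hno
      have hpC : p ∉ C := by
        intro hpc
        have := hno p hpc
        simp at this
        linarith
      have hins : insert p C ∈ 𝒮 := by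
        rw [h𝒮, Finset.mem_filter, Finset.mem_powerset]
        refine ⟨Finset.insert_subset hp hCP, ?_⟩
        intro a ha b hb hab
        rcases Finset.mem_insert.1 ha with ha' | ha'
        · rcases Finset.mem_insert.1 hb with hb' | hb'
          · exact absurd (ha'.trans hb'.symm) hab
          · subst ha'; exact hno b hb'
        · rcases Finset.mem_insert.1 hb with hb' | hb'
          · subst hb'; rw [dist_comm]; exact hno a ha'
          · exact hCsep a ha' b hb' hab
      have := hCmax _ hins
      rw [Finset.card_insert_of_notMem hpC] at this
      omega
    have hk' : k < C.card := hall C hCP hCsep hCnet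
    -- injective map from C to S
    have hf : ∀ c : X, c ∈ C → ∃ s ∈ S, dist c s ≤ ρ := fun c hc => hScov c (hCP hc)
    set f : X → X := fun c => if h : c ∈ C then (hf c h).choose else c with hfdef
    have hfS : ∀ c ∈ C, f c ∈ S := by
      intro c hc; simp only [hfdef, dif_pos hc]; exact (hf c hc).choose_spec.1
    have hfd : ∀ c ∈ C, dist c (f c) ≤ ρ := by
      intro c hc; simp only [hfdef, dif_pos hc]; exact (hf c hc).choose_spec.2
    have hinj : Set.InjOn f C := by
      intro a ha b hb hab
      by_contra hne
      have h1 : r ≤ dist a b := hCsep a ha b hb hne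
      have h2 : dist a b ≤ dist a (f b) + dist (f b) b := dist_triangle a (f b) b
      have h3 : dist (f b) b ≤ ρ := by rw [dist_comm]; exact hfd b hb
      have h4 : dist a (f b) ≤ ρ := hab ▸ hfd a ha
      linarith
    have hcard : C.card ≤ S.card := Finset.card_le_card_of_injOn f hfS hinj
    omega
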